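/- Suppose a and b are Drazin invertible with ab = λba, λ ≠ 0, and let t = ind(b). Then 1 − b·b^π·a^D is invertible with inverse 1 + b·a^D·b^π + (b·a^D)²·b^π + ⋯ + (b·a^D)^(t−1)·b^π, where b^π = 1 − b·b^D. -/

import Mathlib

/-- `x` is a Drazin inverse of `a`. -/
def IsDrazinInverse {A : Type*} [Ring A] (a x : A) : Prop :=
  x * a * x = x ∧ a * x = x * a ∧ ∃ k : ℕ, a ^ (k + 1) * x = a ^ k

private lemma xpow_aux {F A : Type*} [Field F] [Ring A] [Algebra F A]
    (a x : A) (μ : F) (hx : x * a = μ • (a * x)) :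
    ∀ n : ℕ, x * a ^ n = μ ^ n • (a ^ n * x) := by
  intro n
  induction n with
  | zero => simp
  | succ n ih =>
    rw [pow_succ, ← mul_assoc, ih, smul_mul_assoc, mul_assoc, hx, mul_smul_comm,
      smul_smul, ← mul_assoc, ← pow_succ, ← pow_succ]

private lemma drazin_lcomm {F A : Type*} [Field F] [Ring A] [Algebra F A]
    (a c x : A) (hc : IsDrazinInverse a c) (μ : F) (hμ : μ ≠ 0)
    (hx : x * a = μ • (a * x)) : c * x = μ • (x * c) := by
  obtain ⟨hcac, hcomm, k, hk⟩ := hc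
  have hca : Commute a c := hcomm
  -- c^(n+1) * a^n = c
  have hcn : ∀ n : ℕ, c ^ (n + 1) * a ^ n = c := by
    intro n
    induction n with
    | zero => simp
    | succ n ih =>
      have : c ^ (n + 1 + 1) * a ^ (n + 1) = (c ^ (n + 1) * a ^ n) * (c * a) := by
        rw [pow_succ c, pow_succ a]
        have h1 : c ^ (n+1) * c * (a ^ n * a) = c ^ (n+1) * (c * a ^ n) * a := by
          noncomm_ring
        rw [h1, (hca.symm.pow_right n).eq]
        noncomm_ring
      rw [this, ih, ← hcomm, ← mul_assoc, hcac]
  have hack : a ^ k * c ^ (k + 1) = c := ((hca.pow_pow k (k+1)).eq).trans (hcn k)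
  have h1 : a * c * a ^ k = a ^ k := by
    rw [mul_assoc, (hca.symm.pow_right k).eq, ← mul_assoc, ← pow_succ' a k, hk]
  have hidem : IsIdempotentElem (c * a) := by
    unfold IsIdempotentElem
    rw [← mul_assoc, hcac]
  have he : (c * a) ^ (k + 1) = c * a := hidem.pow_succ_eq k
  have hxk := xpow_aux a x μ hx
  -- hA : x * c = (a*c) * (x*c)
  have hA : x * c = a * c * (x * c) := by
    calc x * c = x * (a ^ k * c ^ (k+1)) := by rw [hack]
      _ = (x * a ^ k) * c ^ (k+1) := by rw [mul_assoc]
      _ = (μ ^ k • (a ^ k * x)) * c ^ (k+1) := by rw [hxk k]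
      _ = μ ^ k • (a ^ k * x * c ^ (k+1)) := by rw [smul_mul_assoc]
      _ = μ ^ k • ((a * c * a ^ k) * x * c ^ (k+1)) := by rw [h1]
      _ = (a * c) * ((μ ^ k • (a ^ k * x)) * c ^ (k+1)) := by
          rw [smul_mul_assoc, mul_smul_comm]
          congr 1
          noncomm_ring
      _ = (a * c) * ((x * a ^ k) * c ^ (k+1)) := by rw [hxk k]
      _ = (a * c) * (x * (a ^ k * c ^ (k+1))) := by rw [mul_assoc x]
      _ = a * c * (x * c) := by rw [hack]
  -- hB
  have hB : μ ^ k • (c * x) = μ ^ (k+1) • (x * c) := by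
    calc μ ^ k • (c * x) = μ ^ k • (c ^ (k+1) * a ^ k * x) := by rw [hcn k]
      _ = c ^ (k+1) * (μ ^ k • (a ^ k * x)) := by
          rw [mul_smul_comm, mul_assoc]
      _ = c ^ (k+1) * (x * a ^ k) := by rw [hxk k]
      _ = c ^ (k+1) * (x * (a ^ (k+1) * c)) := by rw [hk]
      _ = c ^ (k+1) * ((x * a ^ (k+1)) * c) := by rw [mul_assoc x]
      _ = c ^ (k+1) * ((μ ^ (k+1) • (a ^ (k+1) * x)) * c) := by rw [hxk (k+1)]
      _ = μ ^ (k+1) • (c ^ (k+1) * a ^ (k+1) * (x * c)) := by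
          rw [smul_mul_assoc, mul_smul_comm]
          congr 1
          noncomm_ring
      _ = μ ^ (k+1) • ((c * a) ^ (k+1) * (x * c)) := by
          rw [(hca.symm.mul_pow (k+1))]
      _ = μ ^ (k+1) • ((c * a) * (x * c)) := by rw [he]
      _ = μ ^ (k+1) • (x * c) := by rw [← hcomm, ← hA]
  have key := congrArg (fun z => (μ ^ k)⁻¹ • z) hB
  simp only [inv_smul_smul₀ (pow_ne_zero k hμ)] at key
  rw [key, smul_smul]
  congr 1
  rw [pow_succ]
  field_simp

theorem stmt5 {F A : Type*} [Field F] [Ring A] [Algebra F A]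
    (a aD b bD : A) (haD : IsDrazinInverse a aD) (hbD : IsDrazinInverse b bD)
    (l : F) (hl : l ≠ 0) (h : a * b = l • (b * a))
    (t : ℕ) (ht : b ^ (t + 1) * bD = b ^ t)
    (htmin : ∀ k < t, b ^ (k + 1) * bD ≠ b ^ k) :
    (1 - b * (1 - b * bD) * aD) *
        (1 + ∑ i ∈ Finset.Ico 1 t, (b * aD) ^ i * (1 - b * bD)) = 1 ∧
    (1 + ∑ i ∈ Finset.Ico 1 t, (b * aD) ^ i * (1 - b * bD)) *
        (1 - b * (1 - b * bD) * aD) = 1 := by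
  rcases Nat.eq_zero_or_pos t with h0 | ht1
  · subst h0
    have hbb : b * bD = 1 := by simpa using ht
    simp [hbb]
  -- main case : t ≥ 1
  have hli : l⁻¹ ≠ 0 := inv_ne_zero hl
  have hba : b * a = l⁻¹ • (a * b) := by rw [h, inv_smul_smul₀ hl]
  have h1 : aD * b = l⁻¹ • (b * aD) := drazin_lcomm a aD b haD l⁻¹ hli hba
  have h2 : bD * a = l • (a * bD) := drazin_lcomm b bD a hbD l hl h
  have h3 : aD * bD = l • (bD * aD) := drazin_lcomm a aD bD haD l hl h2
  have h1' : b * aD = l • (aD * b) := by rw [h1, smul_inv_smul₀ hl]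
  have h3' : bD * aD = l⁻¹ • (aD * bD) := by rw [h3, inv_smul_smul₀ hl]
  -- π := 1 - b * bD
  set π : A := 1 - b * bD with hπdef
  have hbDb : bD * b = b * bD := hbD.2.1.symm
  have hπaD : π * aD = aD * π := by
    have key : b * bD * aD = aD * (b * bD) := by
      calc b * bD * aD = b * (bD * aD) := by rw [mul_assoc]
        _ = b * (l⁻¹ • (aD * bD)) := by rw [h3']
        _ = l⁻¹ • (b * aD * bD) := by rw [mul_smul_comm, mul_assoc]
        _ = l⁻¹ • ((l • (aD * b)) * bD) := by rw [h1']
        _ = l⁻¹ • l • (aD * b * bD) := by rw [smul_mul_assoc, smul_smul, mul_smul]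
        _ = aD * (b * bD) := by rw [inv_smul_smul₀ hl, mul_assoc]
    simp only [hπdef, sub_mul, mul_sub, one_mul, mul_one, key]
  have hπb : π * b = b * π := by
    have key : b * bD * b = b * (b * bD) := by
      rw [mul_assoc, hbDb]
    simp only [hπdef, sub_mul, mul_sub, one_mul, mul_one, key]
  have hππ : π * π = π := by
    have key : (b * bD) * (b * bD) = b * bD := by
      rw [mul_assoc, ← mul_assoc bD, hbD.1]
    simp only [hπdef, sub_mul, mul_sub, one_mul, mul_one, key]
    abel
  have hcπb : Commute π b := hπb
  have hcπaD : Commute π aD := hπaD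
  have hπX : π * (b * aD) = (b * aD) * π := (hcπb.mul_right hcπaD).eq
  have hπXn : ∀ i : ℕ, π * (b * aD) ^ i = (b * aD) ^ i * π := fun i =>
    ((hcπb.mul_right hcπaD).pow_right i).eq
  have hπaDn : ∀ i : ℕ, π * aD ^ i = aD ^ i * π := fun i =>
    ((hcπaD.pow_right i)).eq
  -- b^t * π = 0
  have hbtπ : b ^ t * π = 0 := by
    rw [hπdef, mul_sub, mul_one, ← mul_assoc, ← pow_succ, ht, sub_self]
  -- (b*aD)^i = c • (b^i * aD^i)
  have haDbn := xpow_aux b aD l⁻¹ h1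
  have hscal : ∀ i : ℕ, ∃ c : F, (b * aD) ^ i = c • (b ^ i * aD ^ i) := by
    intro i
    induction i with
    | zero => exact ⟨1, by simp⟩
    | succ i ih =>
      obtain ⟨c, hc⟩ := ih
      refine ⟨c * (l⁻¹) ^ i, ?_⟩
      rw [pow_succ' (b * aD), hc, mul_smul_comm]
      rw [show b * aD * (b ^ i * aD ^ i) = b * (aD * b ^ i) * aD ^ i by noncomm_ring]
      rw [haDbn i, mul_smul_comm, smul_mul_assoc, smul_smul, mul_comm c]
      congr 1
      rw [show b * (b ^ i * aD) * aD ^ i = (b * b ^ i) * (aD * aD ^ i) by noncomm_ring,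
        ← pow_succ', ← pow_succ']
  have hTt : (b * aD) ^ t * π = 0 := by
    obtain ⟨c, hc⟩ := hscal t
    rw [hc, smul_mul_assoc, mul_assoc, ← hπaDn t, ← mul_assoc, hbtπ, zero_mul, smul_zero]
  -- y = (b*aD) * π
  have hy : b * π * aD = b * aD * π := by
    rw [mul_assoc, hπaD, ← mul_assoc]
  -- telescoping facts
  have hyT : ∀ i : ℕ, (b * π * aD) * ((b * aD) ^ i * π) = (b * aD) ^ (i+1) * π := by
    intro i
    rw [hy]
    calc b * aD * π * ((b * aD) ^ i * π)
        = b * aD * (π * (b * aD) ^ i) * π := by noncomm_ring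
      _ = b * aD * ((b * aD) ^ i * π) * π := by rw [hπXn i]
      _ = (b * aD * (b * aD) ^ i) * (π * π) := by noncomm_ring
      _ = (b * aD) ^ (i+1) * π := by rw [hππ, ← pow_succ']
  have hTy : ∀ i : ℕ, ((b * aD) ^ i * π) * (b * π * aD) = (b * aD) ^ (i+1) * π := by
    intro i
    rw [hy]
    calc (b * aD) ^ i * π * (b * aD * π)
        = (b * aD) ^ i * (π * (b * aD)) * π := by noncomm_ring
      _ = (b * aD) ^ i * ((b * aD) * π) * π := by rw [hπX]
      _ = ((b * aD) ^ i * (b * aD)) * (π * π) := by noncomm_ring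
      _ = (b * aD) ^ (i+1) * π := by rw [hππ, ← pow_succ]
  -- sum identity
  have hsum : (b * aD) ^ 1 * π + ∑ i ∈ Finset.Ico 1 t, (b * aD) ^ (i+1) * π
      = ∑ i ∈ Finset.Ico 1 t, (b * aD) ^ i * π := by
    have e1 : ∑ i ∈ Finset.Ico 1 t, (b * aD) ^ (i+1) * π
        = ∑ i ∈ Finset.Ico 2 (t+1), (b * aD) ^ i * π := by
      rw [Finset.sum_Ico_eq_sum_range, Finset.sum_Ico_eq_sum_range]
      have h2 : t + 1 - 2 = t - 1 := by omega
      rw [h2]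
      refine Finset.sum_congr rfl fun i _ => ?_
      have h3 : 1 + i + 1 = 2 + i := by omega
      rw [h3]
    have e2 := Finset.sum_eq_sum_Ico_succ_bot (a := 1) (b := t+1) (by omega)
      (fun i => (b * aD) ^ i * π)
    have e3 := Finset.sum_Ico_succ_top (a := 1) (b := t) ht1
      (fun i => (b * aD) ^ i * π)
    rw [e1, ← e2, e3, hTt, add_zero]
  have hy1 : b * π * aD = (b * aD) ^ 1 * π := by rw [hy, pow_one]
  constructor
  · have expand : (1 - b * π * aD) * (1 + ∑ i ∈ Finset.Ico 1 t, (b * aD) ^ i * π)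
        = 1 + ∑ i ∈ Finset.Ico 1 t, (b * aD) ^ i * π
          - (b * π * aD + ∑ i ∈ Finset.Ico 1 t, (b * π * aD) * ((b * aD) ^ i * π)) := by
      rw [sub_mul, one_mul, mul_add, mul_one, Finset.mul_sum]
    rw [expand]
    rw [Finset.sum_congr rfl (fun i _ => hyT i), hy1, hsum]
    abel
  · have expand : (1 + ∑ i ∈ Finset.Ico 1 t, (b * aD) ^ i * π) * (1 - b * π * aD)
        = 1 + ∑ i ∈ Finset.Ico 1 t, (b * aD) ^ i * π
          - (b * π * aD + ∑ i ∈ Finset.Ico 1 t, ((b * aD) ^ i * π) * (b * π * aD)) := by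
      rw [mul_sub, mul_one, add_mul, one_mul, Finset.sum_mul]
    rw [expand]
    rw [Finset.sum_congr rfl (fun i _ => hTy i), hy1, hsum]
    abel
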